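/- There exist no x, y, z, t ∈ ℚ satisfying (x² + 1)y² = (x² + 2)z² = 3(t⁴ − 54t² − 117t − 243) with y ≠ 0 or z ≠ 0 — in fact, Skorobogatov's surface given by these equations has no rational points at all in this affine chart. -/

import Mathlib

-- stage 2 of the descent: from a^2 = α^4 + 4 β^4 produce a smaller solution of x^4 = y^4 + z^2
lemma stage2 {α β a : ℤ} (hα : α % 2 = 1) (hco : IsCoprime α β) (hβ : β ≠ 0) (ha : a ≠ 0)
    (h : a ^ 2 = α ^ 4 + 4 * β ^ 4) :
    ∃ g h' w : ℤ, g ^ 4 = h' ^ 4 + w ^ 2 ∧ h' ≠ 0 ∧ w ≠ 0 ∧ g.natAbs < a.natAbs := by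
  -- replace a by |a|
  set A : ℤ := |a| with hA
  have hApos : 0 < A := abs_pos.mpr ha
  have hA2 : A ^ 2 = α ^ 4 + 4 * β ^ 4 := by rw [hA, sq_abs]; exact h
  have hAna : A.natAbs = a.natAbs := Int.natAbs_abs a
  have htrip : PythagoreanTriple (α ^ 2) (2 * β ^ 2) A := by
    show α ^ 2 * (α ^ 2) + 2 * β ^ 2 * (2 * β ^ 2) = A * A
    linear_combination -hA2
  have hαodd : Odd α := Int.odd_iff.mpr hα
  have hcop2 : Int.gcd (α ^ 2) (2 * β ^ 2) = 1 := by
    apply Int.isCoprime_iff_gcd_eq_one.mp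
    obtain ⟨k, hk⟩ := hαodd
    have h2 : IsCoprime α 2 := ⟨1, -k, by linarith⟩
    exact IsCoprime.mul_right (h2.pow_left) ((hco.pow))
  have hx2odd : (α ^ 2) % 2 = 1 := Int.odd_iff.mp (hαodd.pow)
  obtain ⟨r, s, h1, h2, h3, h4, _, h6⟩ :=
    PythagoreanTriple.coprime_classification' htrip hcop2 hx2odd hApos
  have hβ2 : β ^ 2 = r * s := by linarith
  have hb2 : 0 < β ^ 2 := by positivity
  have hrpos : 0 < r := by
    rcases h6.lt_or_eq with h | h
    · exact h
    · exfalso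
      apply hβ
      have hz : β ^ 2 = 0 := by rw [hβ2, ← h]; ring
      exact pow_eq_zero_iff two_ne_zero |>.mp hz
  have hspos : 0 < s := by nlinarith [hb2]
  have hcors : IsCoprime r s := Int.isCoprime_iff_gcd_eq_one.mpr h4
  obtain ⟨g, hg⟩ := Int.sq_of_isCoprime hcors (by linarith : r * s = β ^ 2)
  have hgr : r = g ^ 2 := by
    rcases hg with h | h
    · exact h
    · exfalso; nlinarith [sq_nonneg g]
  obtain ⟨h', hh⟩ := Int.sq_of_isCoprime hcors.symm (by linarith : s * r = β ^ 2)
  have hhs : s = h' ^ 2 := by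
    rcases hh with h | h
    · exact h
    · exfalso; nlinarith [sq_nonneg h']
  refine ⟨g, h', α, by linear_combination -h1 - (r + g ^ 2) * hgr + (s + h' ^ 2) * hhs, ?_, ?_, ?_⟩
  · intro h0; rw [h0] at hhs; simp at hhs; omega
  · intro h0; rw [h0] at hα; norm_num at hα
  · have hgle2 : g.natAbs ^ 2 = r.natAbs := by rw [← Int.natAbs_pow, hgr]
    have hrA : r.natAbs < A.natAbs := by
      apply Int.natAbs_lt_natAbs_of_nonneg_of_lt (le_of_lt hrpos)
      nlinarith
    have : g.natAbs ≤ g.natAbs ^ 2 := Nat.le_self_pow two_ne_zero _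
    omega



set_option maxHeartbeats 2000000 in
theorem flt4m : ∀ (N : ℕ) (a b c : ℤ), a.natAbs = N → a ^ 4 = b ^ 4 + c ^ 2 → b = 0 ∨ c = 0 := by
  intro N
  induction N using Nat.strong_induction_on with
  | _ N IH =>
  intro a b c hN h
  by_contra hcon
  push_neg at hcon
  obtain ⟨hb, hc⟩ := hcon
  have ha : a ≠ 0 := by
    intro h0
    rw [h0] at h
    have hb4 : 0 < b ^ 4 := lt_of_le_of_ne (by positivity) (Ne.symm (pow_ne_zero 4 hb))
    nlinarith [sq_nonneg c]
  by_cases hg : Int.gcd a b = 1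
  · -- coprime case
    have hco : IsCoprime a b := Int.isCoprime_iff_gcd_eq_one.mpr hg
    -- a is odd
    have haodd : a % 2 = 1 := by
      rcases Int.emod_two_eq_zero_or_one a with h2 | h2
      · exfalso
        obtain ⟨k, hk⟩ := Int.dvd_of_emod_eq_zero h2
        have hbodd : b % 2 = 1 := by
          rcases Int.emod_two_eq_zero_or_one b with h3 | h3
          · exfalso
            have : (2:ℤ) ∣ Int.gcd a b := Int.dvd_coe_gcd (Int.dvd_of_emod_eq_zero h2) (Int.dvd_of_emod_eq_zero h3)
            rw [hg] at this
            norm_num at this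
          · exact h3
        obtain ⟨l, hl⟩ := Int.odd_iff.mpr hbodd
        have key : ∀ u v w : ZMod 8, (2*u)^4 ≠ (2*v+1)^4 + w^2 := by decide
        apply key (k : ZMod 8) (l : ZMod 8) (c : ZMod 8)
        have hcast := congrArg (fun n : ℤ => (n : ZMod 8)) h
        rw [hk, hl] at h
        have := congrArg (fun n : ℤ => (n : ZMod 8)) h
        push_cast at this
        simpa [Int.cast_pow] using this
      · exact h2
    -- helper: no common prime factor of b-type and c-type
    rcases Int.emod_two_eq_zero_or_one b with hbe | hbo
    · -- Case 2 : b even, c odd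
      have hcodd : c % 2 = 1 := by
        rcases Int.emod_two_eq_zero_or_one c with h3 | h3
        · exfalso
          have h2a : (2:ℤ) ∣ a ^ 4 := by
            rw [h]
            exact dvd_add (Dvd.dvd.pow (Int.dvd_of_emod_eq_zero hbe) (by norm_num))
              (Dvd.dvd.pow (Int.dvd_of_emod_eq_zero h3) (by norm_num))
          have h2a' : (2:ℤ) ∣ a := Int.prime_two.dvd_of_dvd_pow h2a
          obtain ⟨k, hk⟩ := h2a'
          rw [hk] at haodd
          omega
        · exact h3
      have htrip : PythagoreanTriple c (b ^ 2) (a ^ 2) := by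
        show c * c + b ^ 2 * b ^ 2 = a ^ 2 * (a ^ 2)
        linear_combination -h
      have hgcd : Int.gcd c (b ^ 2) = 1 := by
        by_contra hne
        obtain ⟨p, hp, hp1, hp2⟩ := Nat.Prime.not_coprime_iff_dvd.mp hne
        have hpc : (p:ℤ) ∣ c := Int.natCast_dvd.mpr hp1
        have hpb2 : (p:ℤ) ∣ b ^ 2 := Int.natCast_dvd.mpr hp2
        have hpprime : Prime (p:ℤ) := Nat.prime_iff_prime_int.mp hp
        have hpb : (p:ℤ) ∣ b := hpprime.dvd_of_dvd_pow hpb2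
        have hpa : (p:ℤ) ∣ a := by
          have : (p:ℤ) ∣ a ^ 4 := by
            rw [h]
            exact dvd_add (hpb.pow (by norm_num)) (hpc.pow (by norm_num))
          exact hpprime.dvd_of_dvd_pow this
        exact hpprime.not_unit (hco.isUnit_of_dvd' hpa hpb)
      have hapos : 0 < a ^ 2 := by positivity
      obtain ⟨m, n, h1, h2, h3, h4, h5, h6⟩ :=
        PythagoreanTriple.coprime_classification' htrip hgcd hcodd hapos
      have hmn : 0 < m * n := by nlinarith [pow_pos (abs_pos.mpr hb) 2, sq_abs b]
      have hmpos : 0 < m := by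
        rcases h6.lt_or_eq with hlt | heq
        · exact hlt
        · exfalso; rw [← heq] at hmn; simp at hmn
      have hnpos : 0 < n := by nlinarith
      have hconm : IsCoprime m n := Int.isCoprime_iff_gcd_eq_one.mpr h4
      obtain ⟨l, hl⟩ := Int.dvd_of_emod_eq_zero hbe  -- b = 2 * l
      rcases h5 with ⟨hme, hno⟩ | ⟨hmo, hne⟩
      · -- m even, n odd
        obtain ⟨m0, hm0⟩ := Int.dvd_of_emod_eq_zero hme
        have hl2 : l ^ 2 = m0 * n := by
          have : (4:ℤ) * l ^ 2 = 4 * (m0 * n) := by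
            rw [hl] at h2; rw [hm0] at h2; linear_combination h2
          linarith
        have hcom0 : IsCoprime m0 n := IsCoprime.of_isCoprime_of_dvd_left hconm ⟨2, by linarith [hm0]⟩
        obtain ⟨u, hu⟩ := Int.sq_of_isCoprime hcom0 (by linarith : m0 * n = l ^ 2)
        have hm0u : m0 = u ^ 2 := by
          rcases hu with h' | h'
          · exact h'
          · exfalso; nlinarith [sq_nonneg u]
        obtain ⟨v, hv⟩ := Int.sq_of_isCoprime hcom0.symm (by linarith : n * m0 = l ^ 2)
        have hnv : n = v ^ 2 := by
          rcases hv with h' | h'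
          · exact h'
          · exfalso; nlinarith [sq_nonneg v]
        have hvodd : v % 2 = 1 := by
          rcases Int.emod_two_eq_zero_or_one v with h' | h'
          · exfalso
            obtain ⟨w, hw⟩ := Int.dvd_of_emod_eq_zero h'
            apply absurd hno
            rw [hnv, hw]
            have h22 : (2 * w) ^ 2 = 2 * (2 * w ^ 2) := by ring
            rw [h22]
            omega
          · exact h'
        have hcovu : IsCoprime v u := by
          have h1' : IsCoprime (u^2) (v^2) := by rwa [← hm0u, ← hnv]
          have := IsCoprime.of_isCoprime_of_dvd_left h1' (dvd_pow_self u two_ne_zero)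
          exact (IsCoprime.of_isCoprime_of_dvd_right this (dvd_pow_self v two_ne_zero)).symm
        have hune : u ≠ 0 := by
          intro h0
          exact hmpos.ne' (by rw [hm0, hm0u, h0]; ring)
        have heq2 : a ^ 2 = v ^ 4 + 4 * u ^ 4 := by
          rw [h3, hm0, hm0u, hnv]; ring
        obtain ⟨g, h', w, hgw, hh'ne, hwne, hlt⟩ := stage2 hvodd hcovu hune ha heq2
        rcases IH g.natAbs (by omega) g h' w rfl hgw with h0 | h0
        · exact hh'ne h0
        · exact hwne h0
      · -- m odd, n even
        obtain ⟨n0, hn0⟩ := Int.dvd_of_emod_eq_zero hne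
        have hl2 : l ^ 2 = m * n0 := by
          have : (4:ℤ) * l ^ 2 = 4 * (m * n0) := by
            rw [hl, hn0] at h2; linear_combination h2
          linarith
        have hcom0 : IsCoprime m n0 := IsCoprime.of_isCoprime_of_dvd_right hconm ⟨2, by linarith [hn0]⟩
        obtain ⟨u, hu⟩ := Int.sq_of_isCoprime hcom0 (by linarith : m * n0 = l ^ 2)
        have hmu : m = u ^ 2 := by
          rcases hu with h' | h'
          · exact h'
          · exfalso; nlinarith [sq_nonneg u]
        obtain ⟨v, hv⟩ := Int.sq_of_isCoprime hcom0.symm (by linarith : n0 * m = l ^ 2)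
        have hn0v : n0 = v ^ 2 := by
          rcases hv with h' | h'
          · exact h'
          · exfalso; nlinarith [sq_nonneg v]
        have huodd : u % 2 = 1 := by
          rcases Int.emod_two_eq_zero_or_one u with h' | h'
          · exfalso
            obtain ⟨w, hw⟩ := Int.dvd_of_emod_eq_zero h'
            apply absurd hmo
            rw [hmu, hw]
            have h22 : (2 * w) ^ 2 = 2 * (2 * w ^ 2) := by ring
            rw [h22]
            omega
          · exact h'
        have hcovu : IsCoprime u v := by
          have h1' : IsCoprime (u^2) (v^2) := by rwa [← hmu, ← hn0v]
          have := IsCoprime.of_isCoprime_of_dvd_left h1' (dvd_pow_self u two_ne_zero)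
          exact IsCoprime.of_isCoprime_of_dvd_right this (dvd_pow_self v two_ne_zero)
        have hvne : v ≠ 0 := by
          intro h0
          exact hnpos.ne' (by rw [hn0, hn0v, h0]; ring)
        have heq2 : a ^ 2 = u ^ 4 + 4 * v ^ 4 := by
          rw [h3, hmu, hn0, hn0v]; ring
        obtain ⟨g, h', w, hgw, hh'ne, hwne, hlt⟩ := stage2 huodd hcovu hvne ha heq2
        rcases IH g.natAbs (by omega) g h' w rfl hgw with h0 | h0
        · exact hh'ne h0
        · exact hwne h0
    · -- Case 1 : b odd
      have htrip : PythagoreanTriple (b ^ 2) c (a ^ 2) := by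
        show b ^ 2 * b ^ 2 + c * c = a ^ 2 * (a ^ 2)
        linear_combination -h
      have hgcd : Int.gcd (b ^ 2) c = 1 := by
        by_contra hne
        obtain ⟨p, hp, hp1, hp2⟩ := Nat.Prime.not_coprime_iff_dvd.mp hne
        have hpb2 : (p:ℤ) ∣ b ^ 2 := Int.natCast_dvd.mpr hp1
        have hpc : (p:ℤ) ∣ c := Int.natCast_dvd.mpr hp2
        have hpprime : Prime (p:ℤ) := Nat.prime_iff_prime_int.mp hp
        have hpb : (p:ℤ) ∣ b := hpprime.dvd_of_dvd_pow hpb2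
        have hpa : (p:ℤ) ∣ a := by
          have : (p:ℤ) ∣ a ^ 4 := by
            rw [h]
            exact dvd_add (hpb.pow (by norm_num)) (hpc.pow (by norm_num))
          exact hpprime.dvd_of_dvd_pow this
        exact hpprime.not_unit (hco.isUnit_of_dvd' hpa hpb)
      have hb2odd : (b ^ 2) % 2 = 1 := Int.odd_iff.mp ((Int.odd_iff.mpr hbo).pow)
      have hapos : 0 < a ^ 2 := by positivity
      obtain ⟨m, n, h1, h2, h3, h4, h5, h6⟩ :=
        PythagoreanTriple.coprime_classification' htrip hgcd hb2odd hapos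
      have hnne : n ≠ 0 := by
        intro h0
        rw [h0] at h2
        simp at h2
        exact hc h2
      have heq2 : m ^ 4 = n ^ 4 + (a * b) ^ 2 := by
        linear_combination (-(a^2)) * h1 - (m^2 - n^2) * h3
      have hlt : m.natAbs < a.natAbs := by
        have hn2 : 0 < n ^ 2 := lt_of_le_of_ne (sq_nonneg n) (Ne.symm (pow_ne_zero 2 hnne))
        have h1' : (m.natAbs : ℤ) ^ 2 < (a.natAbs : ℤ) ^ 2 := by
          rw [Int.natAbs_sq, Int.natAbs_sq]
          nlinarith [h3]
        have hsq : m.natAbs ^ 2 < a.natAbs ^ 2 := by exact_mod_cast h1'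
        by_contra hge
        push_neg at hge
        exact absurd hsq (not_lt.mpr (Nat.pow_le_pow_left hge 2))
      rcases IH m.natAbs (by omega) m n (a * b) rfl heq2 with h0 | h0
      · exact hnne h0
      · exact (mul_ne_zero ha hb) h0
  · -- gcd > 1 : divide out
    set g : ℕ := Int.gcd a b with hgdef
    have hg0 : g ≠ 0 := by
      intro h0
      rw [hgdef] at h0
      exact ha (Int.gcd_eq_zero_iff.mp h0).1
    have hg2 : 2 ≤ g := by omega
    have hga : ((g:ℕ):ℤ) ∣ a := by rw [hgdef]; exact Int.gcd_dvd_left a b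
    obtain ⟨a1, ha1⟩ := hga
    have hgb : ((g:ℕ):ℤ) ∣ b := by rw [hgdef]; exact Int.gcd_dvd_right a b
    obtain ⟨b1, hb1⟩ := hgb
    rw [ha1, hb1] at h
    have hgz : ((g:ℕ):ℤ) ≠ 0 := by exact_mod_cast hg0
    have hdvd : (((g:ℕ):ℤ) ^ 2) ^ 2 ∣ c ^ 2 := ⟨a1 ^ 4 - b1 ^ 4, by linear_combination -h⟩
    have hc2 : ((g:ℕ):ℤ) ^ 2 ∣ c := (Int.pow_dvd_pow_iff two_ne_zero).mp hdvd
    obtain ⟨c1, hc1⟩ := hc2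
    rw [hc1] at h
    have heq1 : a1 ^ 4 = b1 ^ 4 + c1 ^ 2 := by
      have h2 : ((g:ℕ):ℤ) ^ 4 * a1 ^ 4 = ((g:ℕ):ℤ) ^ 4 * (b1 ^ 4 + c1 ^ 2) := by
        linear_combination h
      exact mul_left_cancel₀ (pow_ne_zero 4 hgz) h2
    have ha1ne : a1 ≠ 0 := by
      intro h0
      rw [h0, mul_zero] at ha1
      exact ha ha1
    have hsize : a1.natAbs < N := by
      have hNg : N = g * a1.natAbs := by
        rw [← hN, ha1, Int.natAbs_mul, Int.natAbs_natCast]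
      have h1 : 1 ≤ a1.natAbs := by
        have := Int.natAbs_ne_zero.mpr ha1ne
        omega
      calc a1.natAbs < 2 * a1.natAbs := by omega
        _ ≤ g * a1.natAbs := Nat.mul_le_mul_right _ hg2
        _ = N := hNg.symm
    rcases IH a1.natAbs hsize a1 b1 c1 rfl heq1 with h0 | h0
    · apply hb; rw [hb1, h0, mul_zero]
    · apply hc; rw [hc1, h0, mul_zero]



lemma rat_sq_int {r : ℚ} {M : ℤ} (h : r * r = (M : ℚ)) : ∃ s : ℤ, r = (s : ℚ) := by
  have hd : (r * r).den = 1 := by rw [h]; exact Rat.den_intCast M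
  rw [Rat.mul_self_den] at hd
  have hden : r.den = 1 := by
    rcases Nat.eq_one_of_mul_eq_one_left hd with h1
    exact h1
  exact ⟨r.num, by rw [← Rat.num_div_den r, hden]; simp⟩

theorem statement_9 :
    ¬ ∃ x y z t : ℚ,
      (x ^ 2 + 1) * y ^ 2 = 3 * (t ^ 4 - 54 * t ^ 2 - 117 * t - 243) ∧
      (x ^ 2 + 2) * z ^ 2 = 3 * (t ^ 4 - 54 * t ^ 2 - 117 * t - 243) := by
  rintro ⟨x, y, z, t, h1, h2⟩
  -- no rational root of g
  have hN0 : 3 * (t ^ 4 - 54 * t ^ 2 - 117 * t - 243) ≠ 0 := by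
    intro h0
    have hg : t ^ 4 = 54 * t ^ 2 + 117 * t + 243 := by linarith
    have hdenpos : (0:ℤ) < (t.den : ℤ) := by exact_mod_cast t.pos
    have hdq0 : ((t.den:ℚ)) ≠ 0 := Nat.cast_ne_zero.mpr t.den_nz
    have hxt : ((t.num:ℤ):ℚ) = t * ((t.den:ℤ):ℚ) := by
      have h0' := Rat.num_div_den t
      rw [div_eq_iff hdq0] at h0'
      push_cast
      exact_mod_cast h0'
    have hQ : ((t.num:ℤ):ℚ) ^ 4 = 54 * ((t.num:ℤ):ℚ) ^ 2 * ((t.den:ℤ):ℚ) ^ 2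
        + 117 * ((t.num:ℤ):ℚ) * ((t.den:ℤ):ℚ) ^ 3 + 243 * ((t.den:ℤ):ℚ) ^ 4 := by
      rw [hxt]
      linear_combination (((t.den:ℤ):ℚ)) ^ 4 * hg
    have hZ : t.num ^ 4 = 54 * t.num ^ 2 * (t.den:ℤ) ^ 2 + 117 * t.num * (t.den:ℤ) ^ 3
        + 243 * (t.den:ℤ) ^ 4 := by exact_mod_cast hQ
    -- denominator is 1
    have hcop : IsCoprime t.num ((t.den:ℤ)) := by
      apply Int.isCoprime_iff_gcd_eq_one.mpr
      have := t.reduced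
      simpa [Int.gcd] using this
    have hdvd : ((t.den:ℤ)) ∣ t.num ^ 4 :=
      ⟨54 * t.num ^ 2 * (t.den:ℤ) + 117 * t.num * (t.den:ℤ) ^ 2 + 243 * (t.den:ℤ) ^ 3,
        by linear_combination hZ⟩
    have hunit : IsUnit ((t.den:ℤ)) :=
      (hcop.symm.pow_right (n := 4)).isUnit_of_dvd' dvd_rfl hdvd
    have hden1 : ((t.den:ℤ)) = 1 := by
      rcases Int.isUnit_iff.mp hunit with h' | h'
      · exact h'
      · omega
    rw [hden1] at hZ
    have hb1 : t.num ≤ 20 := by nlinarith [sq_nonneg (t.num ^ 2 - 54), sq_nonneg t.num, sq_nonneg (t.num - 59), sq_nonneg (t.num + 59)]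
    have hb2 : -20 ≤ t.num := by nlinarith [sq_nonneg (t.num ^ 2 - 54), sq_nonneg t.num, sq_nonneg (t.num - 59), sq_nonneg (t.num + 59)]
    interval_cases h : t.num <;> norm_num at hZ
  -- (x^2+1)(x^2+2) is a square
  set N : ℚ := 3 * (t ^ 4 - 54 * t ^ 2 - 117 * t - 243) with hNdef
  have hy : y ≠ 0 := by
    intro h0
    rw [h0] at h1
    exact hN0 (by linear_combination -h1)
  have hz : z ≠ 0 := by
    intro h0
    rw [h0] at h2
    exact hN0 (by linear_combination -h2)
  have key : (x ^ 2 + 1) * (x ^ 2 + 2) * (y * z) ^ 2 = N ^ 2 := by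
    rw [hNdef]
    linear_combination ((x ^ 2 + 2) * z ^ 2) * h1 + (3 * (t ^ 4 - 54 * t ^ 2 - 117 * t - 243)) * h2
  have hyz : (y * z) ^ 2 ≠ 0 := pow_ne_zero 2 (mul_ne_zero hy hz)
  have hw : (x ^ 2 + 1) * (x ^ 2 + 2) = (N / (y * z)) ^ 2 := by
    rw [div_pow, eq_div_iff hyz]
    linear_combination key
  set w : ℚ := N / (y * z) with hwdef
  -- clear denominators of x
  have hdq0 : ((x.den:ℚ)) ≠ 0 := Nat.cast_ne_zero.mpr x.den_nz
  have hxq : ((x.num:ℤ):ℚ) = x * ((x.den:ℤ):ℚ) := by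
    have h0' := Rat.num_div_den x
    rw [div_eq_iff hdq0] at h0'
    push_cast
    exact_mod_cast h0'
  have hr : (w * ((x.den:ℤ):ℚ) ^ 2) * (w * ((x.den:ℤ):ℚ) ^ 2)
      = (((x.num ^ 2 + (x.den:ℤ) ^ 2) * (x.num ^ 2 + 2 * (x.den:ℤ) ^ 2) : ℤ) : ℚ) := by
    push_cast
    rw [hxq]
    linear_combination (-(((x.den:ℤ):ℚ))^4) * hw
  obtain ⟨s, hs⟩ := rat_sq_int hr
  have hsZ : s * s = (x.num ^ 2 + (x.den:ℤ) ^ 2) * (x.num ^ 2 + 2 * (x.den:ℤ) ^ 2) := by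
    rw [hs] at hr
    exact_mod_cast hr
  -- integer endgame
  set p : ℤ := x.num with hpdef
  set q : ℤ := (x.den:ℤ) with hqdef
  have hq1 : 1 ≤ q := by rw [hqdef]; exact_mod_cast x.pos
  have hcop : IsCoprime p q := by
    apply Int.isCoprime_iff_gcd_eq_one.mpr
    have := x.reduced
    simpa [hpdef, hqdef, Int.gcd] using this
  have hAB : IsCoprime (p ^ 2 + q ^ 2) (p ^ 2 + 2 * q ^ 2) := by
    obtain ⟨a0, b0, hab⟩ := hcop.pow (m := 2) (n := 2)
    exact ⟨2 * a0 - b0, b0 - a0, by linear_combination hab⟩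
  have hprod : (p ^ 2 + q ^ 2) * (p ^ 2 + 2 * q ^ 2) = s ^ 2 := by
    rw [← hsZ]; ring
  obtain ⟨α, hα⟩ := Int.sq_of_isCoprime hAB hprod
  have hA : p ^ 2 + q ^ 2 = α ^ 2 := by
    rcases hα with h' | h'
    · exact h'
    · exfalso; nlinarith [sq_nonneg α, sq_nonneg p]
  obtain ⟨β, hβ⟩ := Int.sq_of_isCoprime hAB.symm (by linear_combination hprod : (p ^ 2 + 2 * q ^ 2) * (p ^ 2 + q ^ 2) = s ^ 2)
  have hB : p ^ 2 + 2 * q ^ 2 = β ^ 2 := by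
    rcases hβ with h' | h'
    · exact h'
    · exfalso; nlinarith [sq_nonneg β, sq_nonneg p]
  by_cases hp0 : p = 0
  · -- then q = 1 and β² = 2
    have hq : IsUnit q := isCoprime_zero_left.mp (hp0 ▸ hcop)
    have hq1' : q = 1 := by
      rcases Int.isUnit_iff.mp hq with h' | h'
      · exact h'
      · omega
    rw [hp0, hq1'] at hB
    have hβ1 : β ≤ 1 := by nlinarith [sq_nonneg (β - 2), sq_nonneg (β - 1)]
    have hβ2 : -1 ≤ β := by nlinarith [sq_nonneg (β + 2), sq_nonneg (β + 1)]
    interval_cases β <;> norm_num at hB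
  · have heq : α ^ 4 = q ^ 4 + (p * β) ^ 2 := by
      linear_combination (-(α ^ 2 + p ^ 2 + q ^ 2)) * hA + p ^ 2 * hB
    rcases flt4m α.natAbs α q (p * β) rfl heq with h0 | h0
    · omega
    · have hβ0 : β ≠ 0 := by
        intro hb0
        rw [hb0] at hB
        nlinarith [sq_nonneg p, sq_nonneg q]
      exact (mul_ne_zero hp0 hβ0) h0
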